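/- For all nonnegative integers a, b, c, the T-shape tree S_{a,b,c} satisfies Q_{S_{a,b,c}}(2) = a + b + c + 2 − abc, where Q is the characteristic polynomial of its adjacency matrix. -/

import Mathlib

open Polynomial

/-- The characteristic polynomial (over `ℝ`) of the adjacency matrix of a finite graph. -/
noncomputable def graphCharpoly {V : Type*} [Fintype V] [DecidableEq V]
    (G : SimpleGraph V) : Polynomial ℝ :=
  letI := Classical.decRel G.Adj
  (G.adjMatrix ℝ).charpoly

/-- `Q_{P_n}`: the characteristic polynomial of the path on `n` vertices. -/
noncomputable def Qpath (n : ℕ) : Polynomial ℝ := graphCharpoly (SimpleGraph.pathGraph n)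

/-- `Q_{C_n}`: the characteristic polynomial of the cycle on `n` vertices. -/
noncomputable def Qcycle (n : ℕ) : Polynomial ℝ := graphCharpoly (SimpleGraph.cycleGraph n)

/-- The T-shape tree `S_{a,b,c}`: a central vertex with three attached paths of
`a`, `b`, `c` vertices respectively (for `a = 0` this is the path `P_{b+c+1}`). -/
def tShape (a b c : ℕ) : SimpleGraph (Option (Fin a ⊕ Fin b ⊕ Fin c)) :=
  SimpleGraph.fromRel (fun x y =>
    match x, y with
    | none, some (Sum.inl j) => (j : ℕ) = 0
    | none, some (Sum.inr (Sum.inl j)) => (j : ℕ) = 0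
    | none, some (Sum.inr (Sum.inr j)) => (j : ℕ) = 0
    | some (Sum.inl i), some (Sum.inl j) => (i : ℕ) + 1 = (j : ℕ)
    | some (Sum.inr (Sum.inl i)), some (Sum.inr (Sum.inl j)) => (i : ℕ) + 1 = (j : ℕ)
    | some (Sum.inr (Sum.inr i)), some (Sum.inr (Sum.inr j)) => (i : ℕ) + 1 = (j : ℕ)
    | _, _ => False)

open Matrix Finset

/-- entry function for the tridiagonal matrix -/
def tmv (x y : ℕ) : ℝ :=
  if x = y then 2 else if x + 1 = y ∨ y + 1 = x then -1 else 0

def Tm (k : ℕ) : Matrix (Fin k) (Fin k) ℝ :=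
  Matrix.of fun i j => tmv i j

/-- entry function for the inverse -/
noncomputable def Tv (k x y : ℕ) : ℝ :=
  (((min x y : ℕ) : ℝ) + 1) * ((k : ℝ) - ((max x y : ℕ) : ℝ)) / ((k : ℝ) + 1)

noncomputable def Tinv (k : ℕ) : Matrix (Fin k) (Fin k) ℝ :=
  Matrix.of fun i j => Tv k i j

lemma key (k n m : ℕ) (hn : n < k) (hm : m < k) :
    2 * Tv k n m - (if n + 1 < k then Tv k (n + 1) m else 0)
      - (if 0 < n then Tv k (n - 1) m else 0) = if n = m then 1 else 0 := by
  have hk : (k : ℝ) + 1 ≠ 0 := by positivity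
  rcases Nat.lt_trichotomy n m with h | h | h
  · rw [if_pos (show n + 1 < k by omega), if_neg (show ¬(n = m) by omega)]
    have e1 : min n m = n := by omega
    have e2 : max n m = m := by omega
    have e3 : min (n + 1) m = n + 1 := by omega
    have e4 : max (n + 1) m = m := by omega
    by_cases h0 : 0 < n
    · obtain ⟨p, rfl⟩ : ∃ p, n = p + 1 := ⟨n - 1, by omega⟩
      rw [if_pos h0]
      have e5 : min (p + 1 - 1) m = p := by omega
      have e6 : max (p + 1 - 1) m = m := by omega
      simp only [Tv, e1, e2, e3, e4, e5, e6]
      push_cast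
      field_simp
      ring
    · rw [if_neg h0]
      obtain rfl : n = 0 := by omega
      simp only [Tv, e1, e2, e3, e4]
      push_cast
      field_simp
      ring
  · subst h
    rw [if_pos rfl]
    have e1 : min n n = n := by omega
    have e2 : max n n = n := by omega
    have e3 : min (n + 1) n = n := by omega
    have e4 : max (n + 1) n = n + 1 := by omega
    by_cases h1 : n + 1 < k
    · rw [if_pos h1]
      by_cases h0 : 0 < n
      · obtain ⟨p, rfl⟩ : ∃ p, n = p + 1 := ⟨n - 1, by omega⟩
        rw [if_pos h0]
        have e5 : min (p + 1 - 1) (p + 1) = p := by omega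
        have e6 : max (p + 1 - 1) (p + 1) = p + 1 := by omega
        simp only [Tv, e1, e2, e3, e4, e5, e6]
        push_cast
        field_simp
        ring
      · rw [if_neg h0]
        obtain rfl : n = 0 := by omega
        simp only [Tv, e1, e2, e3, e4]
        push_cast
        field_simp
        ring
    · rw [if_neg h1]
      obtain rfl : k = n + 1 := by omega
      by_cases h0 : 0 < n
      · obtain ⟨p, rfl⟩ : ∃ p, n = p + 1 := ⟨n - 1, by omega⟩
        rw [if_pos h0]
        have e5 : min (p + 1 - 1) (p + 1) = p := by omega
        have e6 : max (p + 1 - 1) (p + 1) = p + 1 := by omega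
        simp only [Tv, e1, e2, e5, e6]
        push_cast
        field_simp
        ring
      · rw [if_neg h0]
        obtain rfl : n = 0 := by omega
        simp only [Tv, e1, e2]
        norm_num
  · obtain ⟨p, rfl⟩ : ∃ p, n = p + 1 := ⟨n - 1, by omega⟩
    rw [if_neg (show ¬(p + 1 = m) by omega), if_pos (show 0 < p + 1 by omega)]
    have e1 : min (p + 1) m = m := by omega
    have e2 : max (p + 1) m = p + 1 := by omega
    have e5 : min (p + 1 - 1) m = m := by omega
    have e6 : max (p + 1 - 1) m = p := by omega
    by_cases h1 : p + 1 + 1 < k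
    · rw [if_pos h1]
      have e3 : min (p + 1 + 1) m = m := by omega
      have e4 : max (p + 1 + 1) m = p + 1 + 1 := by omega
      simp only [Tv, e1, e2, e3, e4, e5, e6]
      push_cast
      field_simp
      ring
    · rw [if_neg h1]
      obtain rfl : k = p + 1 + 1 := by omega
      simp only [Tv, e1, e2, e5, e6]
      push_cast
      field_simp
      ring

lemma tri_sum {k : ℕ} (i : Fin k) (g : Fin k → ℝ) :
    ∑ l, Tm k i l * g l =
      2 * g i - (if h : (i : ℕ) + 1 < k then g ⟨(i : ℕ) + 1, h⟩ else 0)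
        - (if h : 0 < (i : ℕ) then g ⟨(i : ℕ) - 1, by omega⟩ else 0) := by
  have hsplit : ∀ l : Fin k, Tm k i l * g l =
      (if i = l then 2 * g l else 0) + (-(if ((i : ℕ) + 1 = (l : ℕ)) then g l else 0))
        + (-(if ((l : ℕ) + 1 = (i : ℕ)) then g l else 0)) := by
    intro l
    simp only [Tm, Matrix.of_apply, tmv]
    have : i = l ↔ (i : ℕ) = l := by simp [Fin.ext_iff]
    split_ifs <;> simp_all <;> try omega
    all_goals ring
  rw [Finset.sum_congr rfl fun l _ => hsplit l]
  rw [Finset.sum_add_distrib, Finset.sum_add_distrib]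
  congr 1
  · congr 1
    · rw [Finset.sum_ite_eq univ i (fun l => 2 * g l)]
      simp
    · rw [Finset.sum_neg_distrib]
      congr 1
      by_cases h : (i : ℕ) + 1 < k
      · rw [dif_pos h, Finset.sum_eq_single (⟨(i : ℕ) + 1, h⟩ : Fin k)]
        · simp
        · intro l _ hl
          rw [if_neg]
          intro hc
          exact hl (by simp [Fin.ext_iff, ← hc])
        · simp
      · rw [dif_neg h, Finset.sum_eq_zero]
        intro l _
        rw [if_neg]
        intro hc
        omega
  · rw [Finset.sum_neg_distrib]
    congr 1
    by_cases h : 0 < (i : ℕ)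
    · rw [dif_pos h, Finset.sum_eq_single (⟨(i : ℕ) - 1, by omega⟩ : Fin k)]
      · rw [if_pos]
        simp
        omega
      · intro l _ hl
        rw [if_neg]
        intro hc
        exact hl (by simp [Fin.ext_iff]; omega)
      · simp
    · rw [dif_neg h, Finset.sum_eq_zero]
      intro l _
      rw [if_neg]
      intro hc
      omega

lemma Tm_mul_Tinv (k : ℕ) : Tm k * Tinv k = 1 := by
  ext i j
  rw [Matrix.mul_apply]
  rw [tri_sum i (fun l => Tinv k l j)]
  have hd1 : (if h : (i : ℕ) + 1 < k then Tinv k ⟨(i : ℕ) + 1, h⟩ j else 0)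
      = (if (i : ℕ) + 1 < k then Tv k ((i : ℕ) + 1) j else 0) := by
    split_ifs <;> rfl
  have hd2 : (if h : 0 < (i : ℕ) then Tinv k ⟨(i : ℕ) - 1, by omega⟩ j else 0)
      = (if 0 < (i : ℕ) then Tv k ((i : ℕ) - 1) j else 0) := by
    split_ifs <;> rfl
  have hone : (1 : Matrix (Fin k) (Fin k) ℝ) i j = if (i : ℕ) = (j : ℕ) then 1 else 0 := by
    simp [Matrix.one_apply, Fin.ext_iff]
  rw [hd1, hd2, hone]
  exact key k i j i.isLt j.isLt

lemma Tm_transpose (k : ℕ) : (Tm k)ᵀ = Tm k := by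
  ext i j
  simp only [Matrix.transpose_apply, Tm, Matrix.of_apply, tmv]
  split_ifs <;> first | rfl | tauto | (exfalso; omega)

lemma Tinv_transpose (k : ℕ) : (Tinv k)ᵀ = Tinv k := by
  ext i j
  simp only [Matrix.transpose_apply, Tinv, Matrix.of_apply, Tv, min_comm, max_comm]

lemma Tinv_mul_Tm (k : ℕ) : Tinv k * Tm k = 1 := by
  have := congrArg Matrix.transpose (Tm_mul_Tinv k)
  rwa [Matrix.transpose_mul, Tm_transpose, Tinv_transpose, Matrix.transpose_one] at this

lemma tmv_succ_succ (x y : ℕ) : tmv (x + 1) (y + 1) = tmv x y := by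
  simp only [tmv]
  split_ifs <;> first | rfl | tauto | (exfalso; omega)

lemma Tm_det (k : ℕ) : (Tm k).det = (k : ℝ) + 1 := by
  induction k using Nat.twoStepInduction with
  | zero => simp [Matrix.det_isEmpty]
  | one =>
    rw [Matrix.det_fin_one]
    norm_num [Tm, tmv]
  | more n ih1 ih2 =>
    have hrec : (Tm (n + 2)).det = 2 * (Tm (n + 1)).det - (Tm n).det := by
      rw [Matrix.det_succ_row_zero, Fin.sum_univ_succ, Fin.sum_univ_succ]
      have hz : ∑ i : Fin n, ((-1 : ℝ)) ^ ((i.succ.succ : Fin (n + 2)) : ℕ) *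
          Tm (n + 2) 0 i.succ.succ *
          ((Tm (n + 2)).submatrix Fin.succ (i.succ.succ).succAbove).det = 0 := by
        apply Finset.sum_eq_zero
        intro l _
        have h0 : Tm (n + 2) 0 l.succ.succ = 0 := by
          simp only [Tm, Matrix.of_apply, tmv, Fin.val_succ, Fin.val_zero, Nat.succ_ne_zero,
            or_false, false_or]
          split_ifs <;> first | rfl | tauto | (exfalso; omega)
        rw [h0]
        ring
      rw [hz]
      have hA : (Tm (n + 2)).submatrix Fin.succ ((0 : Fin (n + 2)).succAbove) = Tm (n + 1) := by
        rw [Fin.succAbove_zero]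
        ext i j
        simp only [Matrix.submatrix_apply, Tm, Matrix.of_apply, Fin.val_succ]
        exact tmv_succ_succ _ _
      have h00 : Tm (n + 2) 0 0 = 2 := by norm_num [Tm, tmv]
      have h01 : Tm (n + 2) 0 (Fin.succ (0 : Fin (n + 1))) = -1 := by
        simp only [Tm, Matrix.of_apply, tmv, Fin.val_zero, Fin.val_one]
        norm_num
      rw [hA, h00, h01]
      -- remaining: compute det of the (0,1) minor
      have hB : ((Tm (n + 2)).submatrix Fin.succ ((Fin.succ (0 : Fin (n + 1))).succAbove)).det
          = -(Tm n).det := by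
        rw [Matrix.det_succ_column_zero, Fin.sum_univ_succ]
        have hz2 : ∑ i : Fin n, ((-1 : ℝ)) ^ ((i.succ : Fin (n + 1)) : ℕ) *
            (Tm (n + 2)).submatrix Fin.succ ((Fin.succ (0 : Fin (n + 1))).succAbove) i.succ 0 *
            (((Tm (n + 2)).submatrix Fin.succ
              ((Fin.succ (0 : Fin (n + 1))).succAbove)).submatrix i.succ.succAbove Fin.succ).det = 0 := by
          apply Finset.sum_eq_zero
          intro l _
          have h0 : (Tm (n + 2)).submatrix Fin.succ ((Fin.succ (0 : Fin (n + 1))).succAbove) l.succ 0 = 0 := by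
            have hv : (((Fin.succ (0 : Fin (n + 1))).succAbove 0 : Fin (n + 2)) : ℕ) = 0 := by
              simp [Fin.succAbove, Fin.lt_def]
            simp only [Matrix.submatrix_apply, Tm, Matrix.of_apply, tmv, Fin.val_succ, hv,
              Nat.succ_ne_zero, or_false, false_or]
            split_ifs <;> first | rfl | tauto | (exfalso; omega)
          rw [h0]
          ring
        rw [hz2, add_zero]
        have hv : (((Fin.succ (0 : Fin (n + 1))).succAbove 0 : Fin (n + 2)) : ℕ) = 0 := by
          simp [Fin.succAbove, Fin.lt_def]
        have hentry : (Tm (n + 2)).submatrix Fin.succ ((Fin.succ (0 : Fin (n + 1))).succAbove) 0 0 = -1 := by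
          simp only [Matrix.submatrix_apply, Tm, Matrix.of_apply, tmv, Fin.val_succ, hv,
            Fin.val_zero]
          norm_num
        have hC : ((Tm (n + 2)).submatrix Fin.succ
            ((Fin.succ (0 : Fin (n + 1))).succAbove)).submatrix ((0 : Fin (n + 1)).succAbove) Fin.succ
            = Tm n := by
          rw [Fin.succAbove_zero]
          ext i j
          have hv2 : (((Fin.succ (0 : Fin (n + 1))).succAbove j.succ : Fin (n + 2)) : ℕ) = (j : ℕ) + 2 := by
            simp [Fin.succAbove, Fin.lt_def]
          simp only [Matrix.submatrix_apply, Tm, Matrix.of_apply, Fin.val_succ, hv2]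
          exact (tmv_succ_succ ((i : ℕ) + 1) ((j : ℕ) + 1)).trans (tmv_succ_succ _ _)
        rw [hentry, hC]
        simp
      rw [hB]
      simp
      ring
    rw [hrec, ih1, ih2]
    push_cast
    ring

lemma ind_sum {k : ℕ} (hk : 0 < k) (g : Fin k → ℝ) :
    ∑ i : Fin k, (if (i : ℕ) = 0 then (-1 : ℝ) else 0) * g i = -g ⟨0, hk⟩ := by
  rw [Finset.sum_eq_single (⟨0, hk⟩ : Fin k)]
  · simp
  · intro l _ hl
    rw [if_neg, zero_mul]
    intro hc
    exact hl (by simp [Fin.ext_iff, hc])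
  · simp

lemma ind_sum' {k : ℕ} (hk : 0 < k) (g : Fin k → ℝ) :
    ∑ i : Fin k, g i * (if (i : ℕ) = 0 then (-1 : ℝ) else 0) = -g ⟨0, hk⟩ := by
  rw [Finset.sum_eq_single (⟨0, hk⟩ : Fin k)]
  · simp
  · intro l _ hl
    rw [if_neg, mul_zero]
    intro hc
    exact hl (by simp [Fin.ext_iff, hc])
  · simp

lemma arm_sum {k : ℕ} (j : Fin k) :
    ∑ i : Fin k, (if (i : ℕ) = 0 then (-1 : ℝ) else 0) * Tinv k i j = -Tv k 0 j := by
  have hk : 0 < k := j.pos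
  rw [ind_sum hk (fun i => Tinv k i j)]
  rfl

lemma Tv00 (k : ℕ) : Tv k 0 0 = (k : ℝ) / ((k : ℝ) + 1) := by
  simp [Tv]

lemma arm_sum2 {k : ℕ} :
    ∑ j : Fin k, (-Tv k 0 (j : ℕ)) * (if (j : ℕ) = 0 then (-1 : ℝ) else 0) = Tv k 0 0 := by
  rcases Nat.eq_zero_or_pos k with rfl | hk
  · simp [Tv]
  · rw [ind_sum' hk (fun j => -Tv k 0 (j : ℕ))]
    norm_num

def uvec (a b c : ℕ) : (Fin a ⊕ Fin b ⊕ Fin c) → ℝ :=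
  Sum.elim (fun i => if (i : ℕ) = 0 then -1 else 0)
    (Sum.elim (fun i => if (i : ℕ) = 0 then -1 else 0)
      (fun i => if (i : ℕ) = 0 then -1 else 0))

def Dmat (a b c : ℕ) : Matrix (Fin a ⊕ Fin b ⊕ Fin c) (Fin a ⊕ Fin b ⊕ Fin c) ℝ :=
  Matrix.fromBlocks (Tm a) 0 0 (Matrix.fromBlocks (Tm b) 0 0 (Tm c))

noncomputable def Dmatinv (a b c : ℕ) :
    Matrix (Fin a ⊕ Fin b ⊕ Fin c) (Fin a ⊕ Fin b ⊕ Fin c) ℝ :=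
  Matrix.fromBlocks (Tinv a) 0 0 (Matrix.fromBlocks (Tinv b) 0 0 (Tinv c))

def Bmat (a b c : ℕ) : Matrix (Fin a ⊕ Fin b ⊕ Fin c) Unit ℝ :=
  Matrix.of fun x _ => uvec a b c x

def Cmat (a b c : ℕ) : Matrix Unit (Fin a ⊕ Fin b ⊕ Fin c) ℝ :=
  Matrix.of fun _ x => uvec a b c x

def A2mat : Matrix Unit Unit ℝ := Matrix.of fun _ _ => 2

lemma hD_mul (a b c : ℕ) : Dmat a b c * Dmatinv a b c = 1 := by
  simp only [Dmat, Dmatinv, Matrix.fromBlocks_multiply, Matrix.mul_zero, Matrix.zero_mul,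
    add_zero, zero_add, Tm_mul_Tinv, Matrix.fromBlocks_one]

lemma hDinv_mul (a b c : ℕ) : Dmatinv a b c * Dmat a b c = 1 := by
  simp only [Dmat, Dmatinv, Matrix.fromBlocks_multiply, Matrix.mul_zero, Matrix.zero_mul,
    add_zero, zero_add, Tinv_mul_Tm, Matrix.fromBlocks_one]

lemma det_Dmat (a b c : ℕ) :
    (Dmat a b c).det = ((a : ℝ) + 1) * (((b : ℝ) + 1) * ((c : ℝ) + 1)) := by
  simp only [Dmat, Matrix.det_fromBlocks_zero₂₁, Tm_det]

lemma row_lemma (a b c : ℕ) : Cmat a b c * Dmatinv a b c =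
    Matrix.of fun _ y => Sum.elim (fun j : Fin a => -Tv a 0 (j : ℕ))
      (Sum.elim (fun j : Fin b => -Tv b 0 (j : ℕ)) (fun j : Fin c => -Tv c 0 (j : ℕ))) y := by
  ext u y
  rcases y with j | j | j
  · simp only [Matrix.mul_apply, Cmat, Dmatinv, Matrix.of_apply, Fintype.sum_sum_type,
      Matrix.fromBlocks_apply₁₁, Matrix.fromBlocks_apply₂₁, uvec, Sum.elim_inl, Sum.elim_inr,
      Matrix.zero_apply, mul_zero, Finset.sum_const_zero, add_zero]
    exact arm_sum j
  · simp only [Matrix.mul_apply, Cmat, Dmatinv, Matrix.of_apply, Fintype.sum_sum_type,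
      Matrix.fromBlocks_apply₁₂, Matrix.fromBlocks_apply₂₂, Matrix.fromBlocks_apply₁₁,
      Matrix.fromBlocks_apply₂₁, uvec, Sum.elim_inl, Sum.elim_inr,
      Matrix.zero_apply, mul_zero, Finset.sum_const_zero, add_zero, zero_add]
    exact arm_sum j
  · simp only [Matrix.mul_apply, Cmat, Dmatinv, Matrix.of_apply, Fintype.sum_sum_type,
      Matrix.fromBlocks_apply₁₂, Matrix.fromBlocks_apply₂₂, Matrix.fromBlocks_apply₂₁,
      uvec, Sum.elim_inl, Sum.elim_inr,
      Matrix.zero_apply, mul_zero, Finset.sum_const_zero, add_zero, zero_add]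
    exact arm_sum j

lemma quad (a b c : ℕ) : (Cmat a b c * Dmatinv a b c * Bmat a b c) () ()
    = Tv a 0 0 + (Tv b 0 0 + Tv c 0 0) := by
  rw [row_lemma, Matrix.mul_apply]
  simp only [Matrix.of_apply, Fintype.sum_sum_type, Sum.elim_inl, Sum.elim_inr, Bmat, uvec]
  rw [arm_sum2, arm_sum2, arm_sum2]

set_option maxHeartbeats 1000000

/-- `Q_{S_{a,b,c}}(2) = a + b + c + 2 − abc`. -/
theorem tShape_charpoly_eval_two (a b c : ℕ) :
    (graphCharpoly (tShape a b c)).eval 2 =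
      (a : ℝ) + b + c + 2 - a * b * c := by
  letI : DecidableRel (tShape a b c).Adj := Classical.decRel _
  have h1 : graphCharpoly (tShape a b c) = ((tShape a b c).adjMatrix ℝ).charpoly := rfl
  set W : Matrix (Option (Fin a ⊕ Fin b ⊕ Fin c)) (Option (Fin a ⊕ Fin b ⊕ Fin c)) ℝ :=
    Matrix.of fun x y => (if x = y then (2 : ℝ) else 0) - (tShape a b c).adjMatrix ℝ x y with hW
  have h2 : (graphCharpoly (tShape a b c)).eval 2 = W.det := by
    rw [h1, Matrix.charpoly, show ((Matrix.charmatrix ((tShape a b c).adjMatrix ℝ)).det.eval 2)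
        = (Polynomial.evalRingHom (2 : ℝ)) (Matrix.charmatrix ((tShape a b c).adjMatrix ℝ)).det
        from rfl, RingHom.map_det]
    congr 1
    ext x y
    by_cases h : x = y
    · subst h
      simp [Matrix.charmatrix_apply_eq, hW]
    · simp [Matrix.charmatrix_apply_ne _ _ _ h, h, hW, apply_ite (Polynomial.eval (2:ℝ))]
  set e := (Equiv.optionEquivSumPUnit (Fin a ⊕ Fin b ⊕ Fin c)).symm with he
  have he1 : ∀ z, e (Sum.inl z) = some z := fun _ => rfl
  have he2 : ∀ u : Unit, e (Sum.inr u) = none := fun _ => rfl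
  have h4 : W.det = (W.submatrix e e).det := (Matrix.det_submatrix_equiv_self e W).symm
  have h5 : W.submatrix e e = Matrix.fromBlocks (Dmat a b c) (Bmat a b c) (Cmat a b c) A2mat := by
    ext x y
    rcases x with (i | i | i) | u <;> rcases y with (j | j | j) | u' <;>
      simp only [Matrix.submatrix_apply, he1, he2, hW, Matrix.of_apply,
        Matrix.fromBlocks_apply₁₁, Matrix.fromBlocks_apply₁₂, Matrix.fromBlocks_apply₂₁,
        Matrix.fromBlocks_apply₂₂, Dmat, Bmat, Cmat, A2mat, Tm, uvec, Sum.elim_inl, Sum.elim_inr,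
        SimpleGraph.adjMatrix_apply, SimpleGraph.adjMatrix, tShape, SimpleGraph.fromRel_adj, Matrix.zero_apply] <;>
      [skip; skip; skip; skip; skip; skip; skip; skip; skip; skip; skip; skip; skip; skip; skip;
        skip]
    · -- arm a / arm a
      by_cases hij : (i : ℕ) = (j : ℕ)
      · have : i = j := Fin.ext hij
        subst this
        norm_num [tmv]
      · have hne : ¬ (some (Sum.inl i) : Option (Fin a ⊕ Fin b ⊕ Fin c)) = some (Sum.inl j) := by
          simp [Fin.ext_iff, hij]
        by_cases hadj : (i : ℕ) + 1 = (j : ℕ) ∨ (j : ℕ) + 1 = (i : ℕ)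
        · rw [if_neg hne, if_pos ⟨hne, hadj⟩, tmv, if_neg hij, if_pos hadj]
          norm_num
        · rw [if_neg hne, if_neg (by tauto), tmv, if_neg hij, if_neg hadj]
          norm_num
    all_goals (try (norm_num [tmv]))
    all_goals (try (simp only [tmv, Fin.ext_iff]))
    all_goals (try simp)
    all_goals (split_ifs <;> first | (exfalso; omega) | norm_num | simp_all)
  letI : Invertible (Dmat a b c) := ⟨Dmatinv a b c, hDinv_mul a b c, hD_mul a b c⟩
  have hinv : ⅟(Dmat a b c) = Dmatinv a b c := invOf_eq_left_inv (hDinv_mul a b c)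
  have h6 : (Matrix.fromBlocks (Dmat a b c) (Bmat a b c) (Cmat a b c) A2mat).det
      = (Dmat a b c).det * (A2mat - Cmat a b c * ⅟(Dmat a b c) * Bmat a b c).det :=
    Matrix.det_fromBlocks₁₁ _ _ _ _
  have h7 : (A2mat - Cmat a b c * Dmatinv a b c * Bmat a b c).det
      = 2 - (Tv a 0 0 + (Tv b 0 0 + Tv c 0 0)) := by
    rw [Matrix.det_unique, show (default : Unit) = () from rfl]
    rw [Matrix.sub_apply, quad]
    norm_num [A2mat]
  rw [h2, h4, h5, h6, hinv, h7, det_Dmat, Tv00, Tv00, Tv00]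
  have ha : (a : ℝ) + 1 ≠ 0 := by positivity
  have hb : (b : ℝ) + 1 ≠ 0 := by positivity
  have hc : (c : ℝ) + 1 ≠ 0 := by positivity
  field_simp
  ring
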